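/- Smith-consequence equals classical consequence (propositional case): Γ ⊨_S Δ (no valuation with I(γ) > 1/2 for all premises γ ∈ Γ and I(δ) < 1/2 for all conclusions δ ∈ Δ) holds if and only if Γ ⊨_C Δ (no {0,1}-valued valuation making all premises 1 and all conclusions 0). -/

import Mathlib

inductive Formula where
  | atom : ℕ → Formula
  | neg : Formula → Formula
  | conj : Formula → Formula → Formula
  | disj : Formula → Formula → Formula

noncomputable def eval (v : ℕ → ℝ) : Formula → ℝ
  | .atom n => v n
  | .neg A => 1 - eval v A
  | .conj A B => min (eval v A) (eval v B)
  | .disj A B => max (eval v A) (eval v B)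

lemma eval_bool (w : ℕ → ℝ) (hw : ∀ n, w n ∈ ({0, 1} : Set ℝ)) :
    ∀ A, eval w A = 0 ∨ eval w A = 1 := by
  intro A
  induction A with
  | atom n => simpa [eval] using hw n
  | neg A ih =>
    rcases ih with h | h <;> simp [eval, h]
  | conj A B ihA ihB =>
    rcases ihA with h | h <;> rcases ihB with h' | h' <;>
      simp_all [eval, min_def]
  | disj A B ihA ihB =>
    rcases ihA with h | h <;> rcases ihB with h' | h' <;>
      simp_all [eval, max_def]

lemma round_lemma (v : ℕ → ℝ) :
    ∀ A, (1/2 < eval v A → eval (fun n => if 1/2 < v n then (1:ℝ) else 0) A = 1) ∧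
         (eval v A < 1/2 → eval (fun n => if 1/2 < v n then (1:ℝ) else 0) A = 0) := by
  set w : ℕ → ℝ := fun n => if 1/2 < v n then (1:ℝ) else 0 with hw
  have hwb : ∀ n, w n ∈ ({0, 1} : Set ℝ) := by
    intro n; simp only [hw]; split_ifs <;> simp
  intro A
  induction A with
  | atom n =>
    refine ⟨fun h => ?_, fun h => ?_⟩ <;> simp only [eval, hw] at h ⊢
    · rw [if_pos h]
    · rw [if_neg (by linarith)]
  | neg A ih =>
    constructor <;> intro h <;> simp only [eval] at h ⊢
    · rw [ih.2 (by linarith)]; ring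
    · rw [ih.1 (by linarith)]; ring
  | conj A B ihA ihB =>
    have hA := eval_bool w hwb A
    have hB := eval_bool w hwb B
    constructor <;> intro h <;> simp only [eval] at h ⊢
    · rw [lt_min_iff] at h
      rw [ihA.1 h.1, ihB.1 h.2]; simp
    · rw [min_lt_iff] at h
      rcases h with h | h
      · rw [ihA.2 h]
        rcases hB with h' | h' <;> simp [h']
      · rw [ihB.2 h]
        rcases hA with h' | h' <;> simp [h']
  | disj A B ihA ihB =>
    have hA := eval_bool w hwb A
    have hB := eval_bool w hwb B
    constructor <;> intro h <;> simp only [eval] at h ⊢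
    · rw [lt_max_iff] at h
      rcases h with h | h
      · rw [ihA.1 h]
        rcases hB with h' | h' <;> simp [h']
      · rw [ihB.1 h]
        rcases hA with h' | h' <;> simp [h']
    · rw [max_lt_iff] at h
      rw [ihA.2 h.1, ihB.2 h.2]; simp

theorem stmt6 (Γ Δ : Finset Formula) :
    (¬ ∃ v : ℕ → ℝ, (∀ n, v n ∈ Set.Icc (0:ℝ) 1) ∧
        (∀ γ ∈ Γ, 1/2 < eval v γ) ∧ (∀ δ ∈ Δ, eval v δ < 1/2)) ↔
    (¬ ∃ v : ℕ → ℝ, (∀ n, v n ∈ ({0, 1} : Set ℝ)) ∧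
        (∀ γ ∈ Γ, eval v γ = 1) ∧ (∀ δ ∈ Δ, eval v δ = 0)) := by
  rw [not_iff_not]
  constructor
  · rintro ⟨v, _, hΓ, hΔ⟩
    refine ⟨fun n => if 1/2 < v n then (1:ℝ) else 0, ?_, ?_, ?_⟩
    · intro n; dsimp only; split_ifs <;> simp
    · intro γ hγ; exact (round_lemma v γ).1 (hΓ γ hγ)
    · intro δ hδ; exact (round_lemma v δ).2 (hΔ δ hδ)
  · rintro ⟨v, hv, hΓ, hΔ⟩
    refine ⟨v, ?_, ?_, ?_⟩
    · intro n; rcases hv n with h | h <;> simp_all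
    · intro γ hγ; rw [hΓ γ hγ]; norm_num
    · intro δ hδ; rw [hΔ δ hδ]; norm_num
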